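/- arXiv:2003.08644 — 3 statements merged into one kernel-verified Lean document; each statement's English description precedes it below -/
import Mathlib

section
/- Let n = 4. For all a, b ∈ V', writing a∧J(a)∧b∧J(b) = Σ_{i<k, j<l} w_{ijkl}(a,b) d'u_i∧d''u_j∧d'u_k∧d''u_l, one has w_{1,3,2,4}(a,b) − w_{1,2,3,4}(a,b) + w_{1,2,4,3}(a,b) = 0. Consequently, the ℝ-linear span of the cone Λ^{2,2}_{+,s}V' of strongly positive Lagerberg (2,2)-forms is a proper linear subspace of the space Λ^{2,2}_{sym}V' of symmetric (2,2)-forms, and Λ^{2,2}_{+,s}V' has empty interior in Λ^{2,2}_{sym}V'. -/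
/- Setup: `V = ℝⁿ` with its standard basis, `V' = Hom_ℝ(V,ℝ)` its dual and `V''` a second
copy of `V'`.  The bigraded algebra of Lagerberg forms `Λ^{·,·}V' = Λ_ℝ(V' ⊕ V'')` is
modeled as the exterior algebra over `ℝ` of the free real module on the `2n` generators
`d'u_1,…,d'u_n` (first summand) and `d''u_1,…,d''u_n` (second summand). -/

noncomputable section
open ExteriorAlgebra

/-- The algebra `Λ^{·,·}V' = Λ_ℝ(V' ⊕ V'')` of Lagerberg forms for `V = ℝⁿ`. -/
abbrev LForms (n : ℕ) : Type := ExteriorAlgebra ℝ ((Fin n ⊕ Fin n) → ℝ)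

/-- The basis element `d'u_i` of `V'`. -/
def ldu {n : ℕ} (i : Fin n) : LForms n := ExteriorAlgebra.ι ℝ (Pi.single (Sum.inl i) (1 : ℝ))

/-- The basis element `d''u_i` of `V''`. -/
def lddu {n : ℕ} (i : Fin n) : LForms n := ExteriorAlgebra.ι ℝ (Pi.single (Sum.inr i) (1 : ℝ))

/-- A general element `Σ cᵢ • d'u_i` of `V'`. -/
def lOne {n : ℕ} (c : Fin n → ℝ) : LForms n := ∑ i, c i • ldu i

/-- A general element `Σ cᵢ • d''u_i` of `V''`; note `J(Σ cᵢ d'u_i) = Σ cᵢ d''u_i`. -/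
def lOne'' {n : ℕ} (c : Fin n → ℝ) : LForms n := ∑ i, c i • lddu i

/-- A decomposable `(p,0)`-form `α₁ ∧ … ∧ α_p` with `α_j ∈ V'`. -/
def lDecomp {n p : ℕ} (c : Fin p → Fin n → ℝ) : LForms n := (List.ofFn fun j => lOne (c j)).prod

/-- Its image `J(α₁) ∧ … ∧ J(α_p)` under the Lagerberg involution. -/
def lDecomp'' {n p : ℕ} (c : Fin p → Fin n → ℝ) : LForms n :=
  (List.ofFn fun j => lOne'' (c j)).prod

/-- `Λ^{p,q}V'`: the span of products of `p` elements of `V'` and `q` elements of `V''`. -/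
def LFormsPQ (n p q : ℕ) : Submodule ℝ (LForms n) :=
  Submodule.span ℝ { x | ∃ (a : Fin p → Fin n → ℝ) (b : Fin q → Fin n → ℝ),
    x = lDecomp a * lDecomp'' b }

/-- The convex cone generated by a set `S` (nonnegative real coefficients). -/
def lCone {n : ℕ} (S : Set (LForms n)) : Set (LForms n) :=
  { x | ∃ (m : ℕ) (t : Fin m → ℝ) (y : Fin m → LForms n),
      (∀ k, 0 ≤ t k) ∧ (∀ k, y k ∈ S) ∧ x = ∑ k, t k • y k }

/-- The generators `α₁ ∧ J(α₁) ∧ … ∧ α_p ∧ J(α_p)` (`α_j ∈ V'`) of the strongly positive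
cone. -/
def lStrongGen (n p : ℕ) : Set (LForms n) :=
  { x | ∃ c : Fin p → Fin n → ℝ, x = (List.ofFn fun j => lOne (c j) * lOne'' (c j)).prod }

/-- The cone `Λ^{p,p}_{+,s}V'` of strongly positive Lagerberg `(p,p)`-forms. -/
def lStrongPos (n p : ℕ) : Set (LForms n) := lCone (lStrongGen n p)

/-- The generators `(-1)^{p(p-1)/2} α ∧ J(α)` (`α ∈ Λ^{p,0}V'`, written as a sum of
decomposables) of the positive cone. -/
def lPosGen (n p : ℕ) : Set (LForms n) :=
  { x | ∃ (m : ℕ) (c : Fin m → Fin p → Fin n → ℝ),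
      x = ((-1 : ℝ)) ^ (p * (p - 1) / 2) • ((∑ l, lDecomp (c l)) * (∑ l, lDecomp'' (c l))) }

/-- The cone `Λ^{p,p}_{+}V'` of positive Lagerberg `(p,p)`-forms. -/
def lPos (n p : ℕ) : Set (LForms n) := lCone (lPosGen n p)

/-- The Lagerberg orientation form `τ_n = d'u_1 ∧ d''u_1 ∧ … ∧ d'u_n ∧ d''u_n`. -/
def lTauTop (n : ℕ) : LForms n := (List.ofFn fun i : Fin n => ldu i * lddu i).prod

/-- `J` is the Lagerberg involution: the (unique) ℝ-algebra automorphism of `Λ^{·,·}V'`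
with `J(d'u_i) = d''u_i` and `J(d''u_i) = d'u_i`. -/
structure IsLagerbergJ (n : ℕ) (J : LForms n → LForms n) : Prop where
  map_add : ∀ x y, J (x + y) = J x + J y
  map_smul : ∀ (c : ℝ) (x), J (c • x) = c • J x
  map_mul : ∀ x y, J (x * y) = J x * J y
  map_one : J 1 = 1
  map_du : ∀ i : Fin n, J (ldu i) = lddu i
  map_ddu : ∀ i : Fin n, J (lddu i) = ldu i

/-- The set `Λ^{p,p}_{sym}V'` of symmetric Lagerberg `(p,p)`-forms:
those with `J(ω) = (-1)^p ω`. -/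
def lSym (n p : ℕ) (J : LForms n → LForms n) : Set (LForms n) :=
  { x | x ∈ LFormsPQ n p p ∧ J x = ((-1 : ℝ)) ^ p • x }

/-- The set `Λ^{p,p}_{+,w}V'` of weakly positive Lagerberg `(p,p)`-forms: symmetric
`(p,p)`-forms `ω` such that for every strongly positive `η` of type `(n-p,n-p)` there is a
real `γ ≥ 0` with `ω ∧ η = γ τ_n`. -/
def lWeakPos (n p : ℕ) (J : LForms n → LForms n) : Set (LForms n) :=
  { x | x ∈ lSym n p J ∧
      ∀ η ∈ lStrongPos n (n - p), ∃ γ : ℝ, 0 ≤ γ ∧ x * η = γ • lTauTop n }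

namespace Aux
abbrev M8 : Type := (Fin 4 ⊕ Fin 4) → ℝ

def coordMap (κ : Fin 4 → (Fin 4 ⊕ Fin 4)) : M8 →ₗ[ℝ] (Fin 4 → ℝ) where
  toFun v := fun r => v (κ r)
  map_add' _ _ := rfl
  map_smul' _ _ := rfl

def detAlt (κ : Fin 4 → (Fin 4 ⊕ Fin 4)) : M8 [⋀^Fin 4]→ₗ[ℝ] ℝ :=
  (Matrix.detRowAlternating).compLinearMap (coordMap κ)

lemma detAlt_apply (κ : Fin 4 → (Fin 4 ⊕ Fin 4)) (v : Fin 4 → M8) :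
    detAlt κ v = (Matrix.of fun i j => v i (κ j)).det := rfl

def gAlt : M8 [⋀^Fin 4]→ₗ[ℝ] ℝ :=
  detAlt ![.inl 0, .inr 2, .inl 1, .inr 3] - detAlt ![.inl 0, .inr 1, .inl 2, .inr 3]
    + detAlt ![.inl 0, .inr 1, .inl 3, .inr 2]

def phi : LForms 4 →ₗ[ℝ] ℝ :=
  ExteriorAlgebra.liftAlternating
    (Function.update (fun i => (0 : M8 [⋀^Fin i]→ₗ[ℝ] ℝ)) 4 gAlt)

lemma phi_prod (v0 v1 v2 v3 : M8) :
    phi (ι ℝ v0 * ι ℝ v1 * ι ℝ v2 * ι ℝ v3) = gAlt ![v0, v1, v2, v3] := by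
  have h : ExteriorAlgebra.ιMulti ℝ 4 ![v0, v1, v2, v3]
      = ι ℝ v0 * ι ℝ v1 * ι ℝ v2 * ι ℝ v3 := by
    rw [ExteriorAlgebra.ιMulti_apply]
    simp [List.ofFn_succ, mul_assoc]
  rw [← h, phi, ExteriorAlgebra.liftAlternating_apply_ιMulti]
  simp

lemma lOne_eq (a : Fin 4 → ℝ) : lOne a = ι ℝ (Sum.elim a (0 : Fin 4 → ℝ)) := by
  have h : (Sum.elim a (0 : Fin 4 → ℝ) : M8)
      = ∑ i, a i • (Pi.single (Sum.inl i) (1 : ℝ) : M8) := by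
    funext s
    cases s with
    | inl i => simp [Finset.sum_apply, Pi.single_apply]
    | inr i => simp [Finset.sum_apply, Pi.single_apply]
  rw [lOne, h, map_sum]
  simp [ldu]

lemma lOne''_eq (a : Fin 4 → ℝ) : lOne'' a = ι ℝ (Sum.elim (0 : Fin 4 → ℝ) a) := by
  have h : (Sum.elim (0 : Fin 4 → ℝ) a : M8)
      = ∑ i, a i • (Pi.single (Sum.inr i) (1 : ℝ) : M8) := by
    funext s
    cases s with
    | inl i => simp [Finset.sum_apply, Pi.single_apply]
    | inr i => simp [Finset.sum_apply, Pi.single_apply]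
  rw [lOne'', h, map_sum]
  simp [lddu]

lemma phi_quad (a b c d : Fin 4 → ℝ) :
    phi (lOne a * lOne'' b * lOne c * lOne'' d) =
      (a 0 * c 1 - a 1 * c 0) * (b 2 * d 3 - b 3 * d 2)
      - (a 0 * c 2 - a 2 * c 0) * (b 1 * d 3 - b 3 * d 1)
      + (a 0 * c 3 - a 3 * c 0) * (b 1 * d 2 - b 2 * d 1) := by
  rw [lOne_eq, lOne''_eq, lOne_eq, lOne''_eq, phi_prod]
  simp only [gAlt, AlternatingMap.sub_apply, AlternatingMap.add_apply, detAlt_apply]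
  have h22 : (Fin.succAbove 2 2 : Fin 4) = 3 := rfl
  simp [Matrix.det_succ_row_zero, Fin.sum_univ_succ, h22]
  ring

lemma plucker (a b : Fin 4 → ℝ) : phi (lOne a * lOne'' a * lOne b * lOne'' b) = 0 := by
  rw [phi_quad]; ring

lemma ldu_eq (i : Fin 4) : ldu i = lOne (Pi.single i 1) := by
  simp [lOne, Pi.single_apply, ite_smul, Finset.sum_ite_eq]

lemma lddu_eq (i : Fin 4) : lddu i = lOne'' (Pi.single i 1) := by
  simp [lOne'', Pi.single_apply, ite_smul, Finset.sum_ite_eq]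

lemma swap (v w : M8) : ι ℝ v * ι ℝ w = -(ι ℝ w * ι ℝ v) :=
  eq_neg_of_add_eq_zero_left (ExteriorAlgebra.ι_add_mul_swap v w)

lemma swap3 (v w : M8) (x : LForms 4) :
    ι ℝ v * (ι ℝ w * x) = -(ι ℝ w * (ι ℝ v * x)) := by
  rw [← mul_assoc, swap, neg_mul, mul_assoc]

lemma comm_form (a a' b b' : Fin 4 → ℝ) :
    lOne a * lOne'' a' * lOne b * lOne'' b'
      = -(lOne a * (lOne b * (lOne'' a' * lOne'' b'))) := by
  rw [lOne_eq a, lOne_eq b, lOne''_eq a', lOne''_eq b']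
  rw [mul_assoc, mul_assoc,
    swap3 (Sum.elim (0 : Fin 4 → ℝ) a') (Sum.elim b (0 : Fin 4 → ℝ)), mul_neg]

lemma comm_form2 (c a d b : Fin 4 → ℝ) :
    lOne'' c * lOne a * lOne'' d * lOne b
      = -(lOne a * (lOne b * (lOne'' c * lOne'' d))) := by
  rw [lOne_eq a, lOne_eq b, lOne''_eq c, lOne''_eq d]
  rw [mul_assoc, mul_assoc]
  rw [swap3 (Sum.elim (0 : Fin 4 → ℝ) c) (Sum.elim a (0 : Fin 4 → ℝ))]
  rw [swap3 (Sum.elim (0 : Fin 4 → ℝ) c) (Sum.elim (0 : Fin 4 → ℝ) d)]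
  rw [swap (Sum.elim (0 : Fin 4 → ℝ) c) (Sum.elim b (0 : Fin 4 → ℝ))]
  simp only [mul_neg, neg_neg]
  rw [swap3 (Sum.elim (0 : Fin 4 → ℝ) d) (Sum.elim b (0 : Fin 4 → ℝ))]
  rw [swap (Sum.elim (0 : Fin 4 → ℝ) d) (Sum.elim (0 : Fin 4 → ℝ) c)]
  simp only [mul_neg, neg_neg]

lemma symm_eq (a b : Fin 4 → ℝ) :
    lOne'' a * lOne a * lOne'' b * lOne b = lOne a * lOne'' a * lOne b * lOne'' b := by
  rw [lOne_eq a, lOne_eq b, lOne''_eq a, lOne''_eq b]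
  rw [mul_assoc]
  rw [swap (Sum.elim (0 : Fin 4 → ℝ) a) (Sum.elim a (0 : Fin 4 → ℝ)),
    swap (Sum.elim (0 : Fin 4 → ℝ) b) (Sum.elim b (0 : Fin 4 → ℝ))]
  rw [neg_mul_neg, ← mul_assoc]

end Aux

namespace Aux
lemma phi_mono (i j k l : Fin 4) :
    phi (ldu i * lddu j * ldu k * lddu l) =
      ((if (0 : Fin 4) = i then (1:ℝ) else 0) * (if (1 : Fin 4) = k then 1 else 0)
          - (if (1 : Fin 4) = i then 1 else 0) * (if (0 : Fin 4) = k then 1 else 0))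
        * ((if (2 : Fin 4) = j then (1:ℝ) else 0) * (if (3 : Fin 4) = l then 1 else 0)
          - (if (3 : Fin 4) = j then 1 else 0) * (if (2 : Fin 4) = l then 1 else 0))
      - ((if (0 : Fin 4) = i then (1:ℝ) else 0) * (if (2 : Fin 4) = k then 1 else 0)
          - (if (2 : Fin 4) = i then 1 else 0) * (if (0 : Fin 4) = k then 1 else 0))
        * ((if (1 : Fin 4) = j then (1:ℝ) else 0) * (if (3 : Fin 4) = l then 1 else 0)
          - (if (3 : Fin 4) = j then 1 else 0) * (if (1 : Fin 4) = l then 1 else 0))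
      + ((if (0 : Fin 4) = i then (1:ℝ) else 0) * (if (3 : Fin 4) = k then 1 else 0)
          - (if (3 : Fin 4) = i then 1 else 0) * (if (0 : Fin 4) = k then 1 else 0))
        * ((if (1 : Fin 4) = j then (1:ℝ) else 0) * (if (2 : Fin 4) = l then 1 else 0)
          - (if (2 : Fin 4) = j then 1 else 0) * (if (1 : Fin 4) = l then 1 else 0)) := by
  simp only [ldu_eq, lddu_eq]
  rw [phi_quad]
  simp only [Pi.single_apply]
end Aux


namespace Aux
set_option maxHeartbeats 800000 in
lemma phi_m1 : phi ((ldu 0 : LForms 4) * lddu 2 * ldu 1 * lddu 3) = 1 := by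
  rw [phi_mono]
  simp (config := { decide := true })

set_option maxHeartbeats 800000 in
lemma phi_m2 : phi ((lddu 0 : LForms 4) * ldu 2 * lddu 1 * ldu 3) = 0 := by
  simp only [ldu, lddu]
  rw [phi_prod]
  simp only [gAlt, AlternatingMap.sub_apply, AlternatingMap.add_apply, detAlt_apply]
  simp (config := { decide := true }) [Matrix.det_succ_row_zero, Fin.sum_univ_succ,
    Pi.single_apply]

def y0 : LForms 4 := ldu 0 * lddu 2 * ldu 1 * lddu 3 + lddu 0 * ldu 2 * lddu 1 * ldu 3

lemma phi_y0 : phi y0 = 1 := by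
  rw [y0, map_add, phi_m1, phi_m2]; norm_num

set_option maxHeartbeats 2000000 in
lemma part1 (a b : Fin 4 → ℝ) (w : Fin 4 → Fin 4 → Fin 4 → Fin 4 → ℝ)
    (h : lOne a * lOne'' a * lOne b * lOne'' b =
      ∑ i, ∑ j, ∑ k, ∑ l,
        (if i < k ∧ j < l then w i j k l else 0) • (ldu i * lddu j * ldu k * lddu l)) :
    w 0 2 1 3 - w 0 1 2 3 + w 0 1 3 2 = 0 := by
  have h2 := congrArg phi h
  rw [plucker] at h2
  simp only [map_sum, map_smul, smul_eq_mul, phi_mono] at h2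
  simp only [Fin.sum_univ_four] at h2
  simp (config := { decide := true }) at h2
  linarith
end Aux

open Aux in
/-- Example 2.18. Let `n = 4`.  For all `a, b ∈ V'`, writing
`a ∧ J(a) ∧ b ∧ J(b) = Σ_{i<k, j<l} w_{ijkl}(a,b) d'u_i ∧ d''u_j ∧ d'u_k ∧ d''u_l`,
one has `w_{1,3,2,4} - w_{1,2,3,4} + w_{1,2,4,3} = 0` (here written with 0-based
indices).  Consequently, the ℝ-linear span of the cone `Λ^{2,2}_{+,s}V'` of strongly
positive Lagerberg `(2,2)`-forms is a proper subset of the space `Λ^{2,2}_{sym}V'` of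
symmetric `(2,2)`-forms, and `Λ^{2,2}_{+,s}V'` has empty interior in `Λ^{2,2}_{sym}V'`
(equivalently, it is annihilated by a linear functional not vanishing on all of
`Λ^{2,2}_{sym}V'`). -/
theorem strongly_positive_cone_spans_proper_subspace
    (J : LForms 4 → LForms 4) (hJ : IsLagerbergJ 4 J) :
    (∀ (a b : Fin 4 → ℝ) (w : Fin 4 → Fin 4 → Fin 4 → Fin 4 → ℝ),
      lOne a * lOne'' a * lOne b * lOne'' b =
        ∑ i, ∑ j, ∑ k, ∑ l,
          (if i < k ∧ j < l then w i j k l else 0) • (ldu i * lddu j * ldu k * lddu l) →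
      w 0 2 1 3 - w 0 1 2 3 + w 0 1 3 2 = 0) ∧
    (Submodule.span ℝ (lStrongPos 4 2) : Set (LForms 4)) ⊂ lSym 4 2 J ∧
    ∃ φ : LForms 4 →ₗ[ℝ] ℝ,
      (∀ x ∈ lStrongPos 4 2, φ x = 0) ∧ ∃ y ∈ lSym 4 2 J, φ y ≠ 0 := by
  classical
  let Jlin : LForms 4 →ₗ[ℝ] LForms 4 :=
    { toFun := J, map_add' := hJ.map_add, map_smul' := fun c x => hJ.map_smul c x }
  have hJ1 : ∀ a : Fin 4 → ℝ, J (lOne a) = lOne'' a := by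
    intro a
    simp [lOne, lOne'', Fin.sum_univ_four, hJ.map_add, hJ.map_smul, hJ.map_du]
  have hJ2 : ∀ a : Fin 4 → ℝ, J (lOne'' a) = lOne a := by
    intro a
    simp [lOne, lOne'', Fin.sum_univ_four, hJ.map_add, hJ.map_smul, hJ.map_ddu]
  have hgen : ∀ c : Fin 2 → Fin 4 → ℝ,
      (List.ofFn fun j => lOne (c j) * lOne'' (c j)).prod
        = lOne (c 0) * lOne'' (c 0) * lOne (c 1) * lOne'' (c 1) := by
    intro c; simp [List.ofFn_succ, mul_assoc]
  have hdecomp : ∀ a b : Fin 4 → ℝ, lDecomp (n := 4) ![a, b] = lOne a * lOne b := by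
    intro a b; simp [lDecomp, List.ofFn_succ]
  have hdecomp'' : ∀ a b : Fin 4 → ℝ, lDecomp'' (n := 4) ![a, b] = lOne'' a * lOne'' b := by
    intro a b; simp [lDecomp'', List.ofFn_succ]
  have hPQmem : ∀ a a' b b' : Fin 4 → ℝ,
      lOne a * lOne'' a' * lOne b * lOne'' b' ∈ LFormsPQ 4 2 2 := by
    intro a a' b b'
    rw [comm_form]
    refine Submodule.neg_mem _ (Submodule.subset_span ?_)
    exact ⟨![a, b], ![a', b'], by rw [hdecomp, hdecomp'', mul_assoc]⟩
  have hPQmem2 : ∀ a a' b b' : Fin 4 → ℝ,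
      lOne'' a' * lOne a * lOne'' b' * lOne b ∈ LFormsPQ 4 2 2 := by
    intro a a' b b'
    rw [comm_form2]
    refine Submodule.neg_mem _ (Submodule.subset_span ?_)
    exact ⟨![a, b], ![a', b'], by rw [hdecomp, hdecomp'', mul_assoc]⟩
  have hJfix : ∀ a b : Fin 4 → ℝ,
      J (lOne a * lOne'' a * lOne b * lOne'' b) = lOne a * lOne'' a * lOne b * lOne'' b := by
    intro a b
    rw [hJ.map_mul, hJ.map_mul, hJ.map_mul, hJ1, hJ2, hJ1, hJ2, symm_eq]
  have hvanish : ∀ x ∈ lStrongPos 4 2, phi x = 0 := by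
    rintro x ⟨m, t, y, ht, hy, rfl⟩
    rw [map_sum]
    refine Finset.sum_eq_zero fun k _ => ?_
    obtain ⟨c, hc⟩ := hy k
    rw [hc, hgen, map_smul, plucker, smul_zero]
  have hT : ∀ x : LForms 4, x ∈ lSym 4 2 J ↔ x ∈ LFormsPQ 4 2 2 ∧ J x = x := by
    intro x
    have h1 : ((-1 : ℝ)) ^ 2 = 1 := by norm_num
    unfold lSym
    rw [Set.mem_setOf_eq, h1, one_smul]
  have hTgen : ∀ x ∈ lStrongPos 4 2, x ∈ lSym 4 2 J := by
    rintro x ⟨m, t, y, ht, hy, rfl⟩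
    rw [hT]
    constructor
    · refine Submodule.sum_mem _ fun k _ => Submodule.smul_mem _ _ ?_
      obtain ⟨c, hc⟩ := hy k
      rw [hc, hgen]
      exact hPQmem _ _ _ _
    · have : ∀ k : Fin m, J (t k • y k) = t k • y k := by
        intro k
        obtain ⟨c, hc⟩ := hy k
        rw [hc, hgen, hJ.map_smul, hJfix]
      calc J (∑ k, t k • y k) = ∑ k, J (t k • y k) := map_sum Jlin _ _
        _ = ∑ k, t k • y k := Finset.sum_congr rfl fun k _ => this k
  have hsymsub : ∀ x ∈ Submodule.span ℝ (lStrongPos 4 2), x ∈ lSym 4 2 J := by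
    intro x hx
    have hle : Submodule.span ℝ (lStrongPos 4 2) ≤
        LFormsPQ 4 2 2 ⊓ LinearMap.eqLocus Jlin LinearMap.id := by
      refine Submodule.span_le.mpr fun z hz => ?_
      obtain ⟨h1, h2⟩ := (hT z).mp (hTgen z hz)
      exact Submodule.mem_inf.mpr ⟨h1, h2⟩
    obtain ⟨h1, h2⟩ := Submodule.mem_inf.mp (hle hx)
    exact (hT x).mpr ⟨h1, h2⟩
  have hy0sym : y0 ∈ lSym 4 2 J := by
    rw [hT]
    constructor
    · refine Submodule.add_mem _ ?_ ?_
      · have := hPQmem (Pi.single 0 1) (Pi.single 2 1) (Pi.single 1 1) (Pi.single 3 1)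
        rw [← ldu_eq, ← ldu_eq, ← lddu_eq, ← lddu_eq] at this
        exact this
      · have := hPQmem2 (Pi.single 2 1) (Pi.single 0 1) (Pi.single 3 1) (Pi.single 1 1)
        rw [← ldu_eq, ← ldu_eq, ← lddu_eq, ← lddu_eq] at this
        exact this
    · rw [y0]
      rw [hJ.map_add, hJ.map_mul, hJ.map_mul, hJ.map_mul, hJ.map_mul, hJ.map_mul,
        hJ.map_mul, hJ.map_du, hJ.map_du, hJ.map_du, hJ.map_du, hJ.map_ddu, hJ.map_ddu,
        hJ.map_ddu, hJ.map_ddu]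
      exact add_comm _ _
  have hy0notspan : y0 ∉ Submodule.span ℝ (lStrongPos 4 2) := by
    intro hy
    have hker : Submodule.span ℝ (lStrongPos 4 2) ≤ LinearMap.ker phi :=
      Submodule.span_le.mpr fun x hx => LinearMap.mem_ker.mpr (hvanish x hx)
    have h0 := LinearMap.mem_ker.mp (hker hy)
    rw [phi_y0] at h0
    norm_num at h0
  refine ⟨part1, ?_, phi, hvanish, y0, hy0sym, by rw [phi_y0]; norm_num⟩
  rw [Set.ssubset_def]
  refine ⟨fun x hx => hsymsub x hx, fun hsub => ?_⟩
  exact hy0notspan (hsub hy0sym)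
end
end

section
/- Let n = 4 and let ω = d'u_3∧d''u_1∧d'u_4∧d''u_2 − d'u_2∧d''u_1∧d'u_4∧d''u_3 + d'u_2∧d''u_1∧d'u_3∧d''u_4 + d'u_1∧d''u_3∧d'u_2∧d''u_4 − d'u_1∧d''u_2∧d'u_3∧d''u_4 + d'u_1∧d''u_2∧d'u_4∧d''u_3 ∈ Λ^{2,2}V'. Then ω is nonzero, symmetric, and satisfies η∧ω = 0 for every strongly positive η ∈ Λ^{2,2}V'; consequently Cω is weakly positive for every real C, so the cone Λ^{2,2}_{+,w}V' of weakly positive Lagerberg (2,2)-forms contains a nonzero linear subspace and in particular is not strictly convex. -/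
/- Setup: `V = ℝⁿ` with its standard basis, `V' = Hom_ℝ(V,ℝ)` its dual and `V''` a second
copy of `V'`.  The bigraded algebra of Lagerberg forms `Λ^{·,·}V' = Λ_ℝ(V' ⊕ V'')` is
modeled as the exterior algebra over `ℝ` of the free real module on the `2n` generators
`d'u_1,…,d'u_n` (first summand) and `d''u_1,…,d''u_n` (second summand). -/

noncomputable section
open ExteriorAlgebra

/-! ### Auxiliary machinery -/

section Aux

open ExteriorAlgebra

lemma lag_swap {n} (x y : (Fin n ⊕ Fin n) → ℝ) :
    ι ℝ x * ι ℝ y = -(ι ℝ y * ι ℝ x) :=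
  eq_neg_of_add_eq_zero_left (ι_add_mul_swap x y)

lemma lagA1 {n} (i : Fin n) : ldu i * ldu i = 0 := ι_sq_zero _
lemma lagA2 {n} (i : Fin n) : lddu i * lddu i = 0 := ι_sq_zero _
lemma lagA1' {n} (i : Fin n) (x : LForms n) : ldu i * (ldu i * x) = 0 := by
  rw [← mul_assoc, lagA1, zero_mul]
lemma lagA2' {n} (i : Fin n) (x : LForms n) : lddu i * (lddu i * x) = 0 := by
  rw [← mul_assoc, lagA2, zero_mul]
lemma lagB1 {n} (i j : Fin n) (_h : j < i) : ldu i * ldu j = -(ldu j * ldu i) := lag_swap _ _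
lemma lagB2 {n} (i j : Fin n) (_h : j < i) : lddu i * lddu j = -(lddu j * lddu i) := lag_swap _ _
lemma lagC1 {n} (i j : Fin n) : lddu i * ldu j = -(ldu j * lddu i) := lag_swap _ _
lemma lagB1' {n} (i j : Fin n) (h : j < i) (x : LForms n) :
    ldu i * (ldu j * x) = -(ldu j * (ldu i * x)) := by
  rw [← mul_assoc, lagB1 i j h, neg_mul, mul_assoc]
lemma lagB2' {n} (i j : Fin n) (h : j < i) (x : LForms n) :
    lddu i * (lddu j * x) = -(lddu j * (lddu i * x)) := by
  rw [← mul_assoc, lagB2 i j h, neg_mul, mul_assoc]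
lemma lagC1' {n} (i j : Fin n) (x : LForms n) :
    lddu i * (ldu j * x) = -(ldu j * (lddu i * x)) := by
  rw [← mul_assoc, lagC1, neg_mul, mul_assoc]

lemma lag_ofFn_two {M : Type*} [Monoid M] (f : Fin 2 → M) :
    (List.ofFn f).prod = f 0 * f 1 := by
  simp [List.ofFn_succ]

lemma lOne_single {n : ℕ} (i : Fin n) : lOne (Pi.single i (1 : ℝ)) = ldu i := by
  simp [lOne, Pi.single_apply, ite_smul]
lemma lOne''_single {n : ℕ} (i : Fin n) : lOne'' (Pi.single i (1 : ℝ)) = lddu i := by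
  simp [lOne'', Pi.single_apply, ite_smul]

lemma lag_gen_mem (i j k l : Fin 4) :
    ldu i * ldu j * (lddu k * lddu l) ∈ LFormsPQ 4 2 2 := by
  apply Submodule.subset_span
  refine ⟨![Pi.single i 1, Pi.single j 1], ![Pi.single k 1, Pi.single l 1], ?_⟩
  simp [lDecomp, lDecomp'', lag_ofFn_two, lOne_single, lOne''_single, mul_assoc]

set_option maxHeartbeats 2000000 in
/-- `(β ∧ J β) ∧ ω = 0` for every `β ∈ V'`. -/
lemma lagK1 (b : Fin 4 → ℝ) :
    (lOne b * lOne'' b) *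
      (ldu 2 * lddu 0 * ldu 3 * lddu 1
      - ldu 1 * lddu 0 * ldu 3 * lddu 2
      + ldu 1 * lddu 0 * ldu 2 * lddu 3
      + ldu 0 * lddu 2 * ldu 1 * lddu 3
      - ldu 0 * lddu 1 * ldu 2 * lddu 3
      + ldu 0 * lddu 1 * ldu 3 * lddu 2 : LForms 4) = 0 := by
  simp only [lOne, lOne'', Fin.sum_univ_four, mul_assoc, mul_add, add_mul, mul_sub, sub_mul,
    smul_mul_assoc, mul_smul_comm, smul_smul,
    lagA1, lagA2, lagA1', lagA2', lagB1, lagB2, lagC1, lagB1', lagB2', lagC1', Fin.reduceLT,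
    mul_neg, neg_mul, neg_neg, mul_zero, zero_mul,
    smul_zero, smul_neg, add_zero, zero_add, sub_zero, zero_sub, neg_zero]
  module

set_option maxHeartbeats 2000000 in
/-- `ω ∧ (α ∧ J α) = 0` for every `α ∈ V'`. -/
lemma lagK2 (a : Fin 4 → ℝ) :
    (ldu 2 * lddu 0 * ldu 3 * lddu 1
      - ldu 1 * lddu 0 * ldu 3 * lddu 2
      + ldu 1 * lddu 0 * ldu 2 * lddu 3
      + ldu 0 * lddu 2 * ldu 1 * lddu 3
      - ldu 0 * lddu 1 * ldu 2 * lddu 3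
      + ldu 0 * lddu 1 * ldu 3 * lddu 2 : LForms 4) *
      (lOne a * lOne'' a) = 0 := by
  simp only [lOne, lOne'', Fin.sum_univ_four, mul_assoc, mul_add, add_mul, mul_sub, sub_mul,
    smul_mul_assoc, mul_smul_comm, smul_smul,
    lagA1, lagA2, lagA1', lagA2', lagB1, lagB2, lagC1, lagB1', lagB2', lagC1', Fin.reduceLT,
    mul_neg, neg_mul, neg_neg, mul_zero, zero_mul,
    smul_zero, smul_neg, add_zero, zero_add, sub_zero, zero_sub, neg_zero]
  module

/-- The standard basis of `ℝ^{4+4}`, reindexed by `Fin 8`. -/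
def lagB8 : Module.Basis (Fin 8) ℝ ((Fin 4 ⊕ Fin 4) → ℝ) :=
  (Pi.basisFun ℝ (Fin 4 ⊕ Fin 4)).reindex finSumFinEquiv

lemma lagB8_eval (i : Fin 8) (s : Fin 4 ⊕ Fin 4) (h : finSumFinEquiv.symm i = s) :
    lagB8 i = Pi.single s 1 := by
  rw [lagB8, Module.Basis.reindex_apply, h, Pi.basisFun_apply]

lemma lagB8_apply (i : Fin 8) :
    lagB8 i = (![Pi.single (Sum.inl 0) 1, Pi.single (Sum.inl 1) 1, Pi.single (Sum.inl 2) 1,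
      Pi.single (Sum.inl 3) 1, Pi.single (Sum.inr 0) 1, Pi.single (Sum.inr 1) 1,
      Pi.single (Sum.inr 2) 1, Pi.single (Sum.inr 3) 1] :
        Fin 8 → ((Fin 4 ⊕ Fin 4) → ℝ)) i := by
  fin_cases i <;> exact lagB8_eval _ _ (by decide)

/-- Family for `liftAlternating`: the determinant in degree `8`, zero elsewhere. -/
def lagFam : ∀ i : ℕ, ((Fin 4 ⊕ Fin 4) → ℝ) [⋀^Fin i]→ₗ[ℝ] ℝ := fun i =>
  if h : i = 8 then h ▸ lagB8.det else 0

/-- Coefficient-extraction functional. -/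
def lagF : LForms 4 →ₗ[ℝ] ℝ := ExteriorAlgebra.liftAlternating lagFam

/-- The top monomial is nonzero. -/
lemma lag_top_ne_zero :
    (ldu 0 * (ldu 1 * (ldu 2 * (ldu 3 * (lddu 0 * (lddu 1 * (lddu 2 * lddu 3)))))) :
      LForms 4) ≠ 0 := by
  intro h
  have hv : (ldu 0 * (ldu 1 * (ldu 2 * (ldu 3 * (lddu 0 * (lddu 1 * (lddu 2 * lddu 3)))))) :
      LForms 4) = ExteriorAlgebra.ιMulti ℝ 8 ⇑lagB8 := by
    rw [ExteriorAlgebra.ιMulti_apply]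
    simp only [List.ofFn_succ, List.ofFn_zero, List.prod_cons, List.prod_nil, mul_one,
      lagB8_apply, Matrix.cons_val_zero, Matrix.cons_val_succ]
    rfl
  have h1 : lagF (ExteriorAlgebra.ιMulti ℝ 8 ⇑lagB8) = 1 := by
    rw [lagF, ExteriorAlgebra.liftAlternating_apply_ιMulti,
      show lagFam 8 = lagB8.det from rfl, Module.Basis.det_self]
  rw [← hv, h, map_zero] at h1
  exact zero_ne_one h1

end Aux

/-- Example 2.18, continued. Let `n = 4` and let
`ω = d'u_3∧d''u_1∧d'u_4∧d''u_2 − d'u_2∧d''u_1∧d'u_4∧d''u_3 + d'u_2∧d''u_1∧d'u_3∧d''u_4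
   + d'u_1∧d''u_3∧d'u_2∧d''u_4 − d'u_1∧d''u_2∧d'u_3∧d''u_4 + d'u_1∧d''u_2∧d'u_4∧d''u_3`
(written with 0-based indices below).  Then `ω` is nonzero, symmetric, and satisfies
`η ∧ ω = 0` for every strongly positive `η ∈ Λ^{2,2}V'`; consequently `C • ω` is weakly
positive for every real `C`, so the cone `Λ^{2,2}_{+,w}V'` contains a nonzero linear
subspace and in particular is not strictly convex. -/
theorem weakly_positive_cone_not_strictly_convex
    (J : LForms 4 → LForms 4) (hJ : IsLagerbergJ 4 J)
    (ω : LForms 4)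
    (hω : ω = ldu 2 * lddu 0 * ldu 3 * lddu 1
      - ldu 1 * lddu 0 * ldu 3 * lddu 2
      + ldu 1 * lddu 0 * ldu 2 * lddu 3
      + ldu 0 * lddu 2 * ldu 1 * lddu 3
      - ldu 0 * lddu 1 * ldu 2 * lddu 3
      + ldu 0 * lddu 1 * ldu 3 * lddu 2) :
    ω ≠ 0 ∧ J ω = ω ∧ (∀ η ∈ lStrongPos 4 2, η * ω = 0) ∧
      ∀ C : ℝ, C • ω ∈ lWeakPos 4 2 J := by
  have hJneg : ∀ x, J (-x) = -J x := fun x => by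
    have h := hJ.map_smul (-1) x
    rwa [neg_one_smul, neg_one_smul] at h
  have hJsub : ∀ x y          , J (x - y) = J x - J y := fun x y => by
    rw [sub_eq_add_neg, hJ.map_add, hJneg, ← sub_eq_add_neg]
  have hJω : J ω = ω := by
    rw [hω]
    simp only [hJsub, hJ.map_add, hJ.map_mul, hJ.map_du, hJ.map_ddu]
    simp only [mul_assoc, lagA1, lagA2, lagA1', lagA2', lagB1, lagB2, lagC1, lagB1', lagB2',
      lagC1', Fin.reduceLT, mul_neg, neg_mul, neg_neg, mul_zero, zero_mul, add_zero, zero_add,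
      sub_zero, zero_sub, neg_zero] <;> module
  have key : ∀ c : Fin 2 → Fin 4 → ℝ,
      ((List.ofFn fun j => lOne (c j) * lOne'' (c j)).prod : LForms 4) * ω = 0 := by
    intro c
    rw [lag_ofFn_two, hω, mul_assoc, lagK1 (c 1), mul_zero]
  have key2 : ∀ c : Fin 2 → Fin 4 → ℝ,
      ω * ((List.ofFn fun j => lOne (c j) * lOne'' (c j)).prod : LForms 4) = 0 := by
    intro c
    rw [lag_ofFn_two, hω, ← mul_assoc, lagK2 (c 0), zero_mul]
  have hμ : ω * (ldu 0 * (ldu 1 * (lddu 2 * lddu 3))) =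
      -(ldu 0 * (ldu 1 * (ldu 2 * (ldu 3 * (lddu 0 * (lddu 1 * (lddu 2 * lddu 3))))))) := by
    rw [hω]
    simp only [mul_assoc, mul_add, add_mul, mul_sub, sub_mul,
      lagA1, lagA2, lagA1', lagA2', lagB1, lagB2, lagC1, lagB1', lagB2', lagC1', Fin.reduceLT,
      mul_neg, neg_mul, neg_neg, mul_zero, zero_mul, add_zero, zero_add, sub_zero, zero_sub,
      neg_zero] <;> module
  have hne : ω ≠ 0 := by
    intro h0
    apply lag_top_ne_zero
    have h := hμ
    rw [h0, zero_mul] at h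
    exact neg_eq_zero.mp h.symm
  have hmem : ω ∈ LFormsPQ 4 2 2 := by
    have hsplit : ω =
        (-1 : ℝ) • (ldu 2 * ldu 3 * (lddu 0 * lddu 1))
        + (1 : ℝ) • (ldu 1 * ldu 3 * (lddu 0 * lddu 2))
        + (-1 : ℝ) • (ldu 1 * ldu 2 * (lddu 0 * lddu 3))
        + (-1 : ℝ) • (ldu 0 * ldu 1 * (lddu 2 * lddu 3))
        + (1 : ℝ) • (ldu 0 * ldu 2 * (lddu 1 * lddu 3))
        + (-1 : ℝ) • (ldu 0 * ldu 3 * (lddu 1 * lddu 2)) := by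
      rw [hω]
      simp only [mul_assoc, neg_smul, one_smul, mul_add, add_mul, mul_sub, sub_mul,
        lagA1, lagA2, lagA1', lagA2', lagB1, lagB2, lagC1, lagB1', lagB2', lagC1', Fin.reduceLT,
        mul_neg, neg_mul, neg_neg, mul_zero, zero_mul, add_zero, zero_add, sub_zero, zero_sub,
        neg_zero] <;> module
    rw [hsplit]
    refine Submodule.add_mem _ (Submodule.add_mem _ (Submodule.add_mem _ (Submodule.add_mem _
      (Submodule.add_mem _ ?_ ?_) ?_) ?_) ?_) ?_ <;>
      exact Submodule.smul_mem _ _ (lag_gen_mem _ _ _ _)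
  have hstrong : ∀ η ∈ lStrongPos 4 2, η * ω = 0 := by
    intro η hη
    obtain ⟨m, t, y, ht, hy, rfl⟩ := hη
    rw [Finset.sum_mul]
    refine Finset.sum_eq_zero fun k _ => ?_
    obtain ⟨c, hc⟩ := hy k
    rw [smul_mul_assoc, hc, key c, smul_zero]
  refine ⟨hne, hJω, hstrong, fun C => ⟨⟨Submodule.smul_mem _ _ hmem, ?_⟩, ?_⟩⟩
  · show J (C • ω) = ((-1 : ℝ)) ^ 2 • (C • ω)
    rw [hJ.map_smul, hJω]
    norm_num
  · intro η hη
    rw [show lStrongPos 4 (4 - 2) = lStrongPos 4 2 from rfl] at hη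
    obtain ⟨m, t, y, ht, hy, rfl⟩ := hη
    refine ⟨0, le_refl 0, ?_⟩
    rw [zero_smul, smul_mul_assoc, Finset.mul_sum]
    have h0 : ∀ k ∈ Finset.univ, ω * (t k • y k) = (0 : LForms 4) := by
      intro k _
      obtain ⟨c, hc⟩ := hy k
      rw [mul_smul_comm, hc, key2 c, smul_zero]
    rw [Finset.sum_congr rfl h0, Finset.sum_const, smul_zero, smul_zero]
end
end

section
/- Let n = 4, β_1 = d'u_1∧d'u_3 − d'u_2∧d'u_4 and β_2 = d'u_1∧d'u_4 + d'u_2∧d'u_3 in Λ^{2,0}V', and let ω = −β_1∧J(β_1) − β_2∧J(β_2) ∈ Λ^{2,2}V'. Then: (1) ω is a positive Lagerberg form; (2) ι(ω) = ½(η + F(η)) for η = (du_1 + i du_2)∧i(dū_1 − i dū_2)∧(du_3 + i du_4)∧i(dū_3 − i dū_4), and ι(ω) is a strongly positive complex form; (3) ω is not a strongly positive Lagerberg form. -/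
/- Setup: `V = ℝⁿ` with its standard basis, `V_ℂ` its complexification,
`V* = Hom_ℝ(V,ℂ)` and `V̄*` the antilinear maps `V_ℂ → ℂ`.  The bigraded exterior algebra
`Λ^{·,·}V* = Λ_ℂ(V* ⊕ V̄*)` is modeled as the exterior algebra over `ℂ` of the free
complex module on the `2n` generators `du_1,…,du_n` (first summand) and
`dū_1,…,dū_n` (second summand). -/

noncomputable section
open ExteriorAlgebra

/-- The algebra `Λ^{·,·}V* = Λ_ℂ(V* ⊕ V̄*)` for `V = ℝⁿ`. -/
abbrev CForms (n : ℕ) : Type := ExteriorAlgebra ℂ ((Fin n ⊕ Fin n) → ℂ)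

/-- The basis element `du_i` of `V*`. -/
def cdu {n : ℕ} (i : Fin n) : CForms n := ExteriorAlgebra.ι ℂ (Pi.single (Sum.inl i) (1 : ℂ))

/-- The basis element `dū_i` of `V̄*`. -/
def cdub {n : ℕ} (i : Fin n) : CForms n := ExteriorAlgebra.ι ℂ (Pi.single (Sum.inr i) (1 : ℂ))

/-- A general element `Σ cᵢ • du_i` of `V*`. -/
def cOne {n : ℕ} (c : Fin n → ℂ) : CForms n := ∑ i, c i • cdu i

/-- A general element `Σ cᵢ • dū_i` of `V̄*`. -/
def cOneBar {n : ℕ} (c : Fin n → ℂ) : CForms n := ∑ i, c i • cdub i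

/-- The conjugate `ᾱ = Σ c̄ᵢ • dū_i ∈ V̄*` of the one-form `α = Σ cᵢ • du_i ∈ V*`. -/
def cConjOne {n : ℕ} (c : Fin n → ℂ) : CForms n := ∑ i, (starRingEnd ℂ) (c i) • cdub i

/-- A decomposable `(p,0)`-form `α₁ ∧ … ∧ α_p` with `α_j ∈ V*`. -/
def cDecomp {n p : ℕ} (c : Fin p → Fin n → ℂ) : CForms n := (List.ofFn fun j => cOne (c j)).prod

/-- The conjugate `ᾱ₁ ∧ … ∧ ᾱ_p` of the decomposable `(p,0)`-form given by `c`. -/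
def cDecompBar {n p : ℕ} (c : Fin p → Fin n → ℂ) : CForms n :=
  (List.ofFn fun j => cConjOne (c j)).prod

/-- `Λ^{p,q}V*`: the span of products of `p` elements of `V*` and `q` elements of `V̄*`. -/
def CFormsPQ (n p q : ℕ) : Submodule ℂ (CForms n) :=
  Submodule.span ℂ { x | ∃ (a : Fin p → Fin n → ℂ) (b : Fin q → Fin n → ℂ),
    x = cDecomp a * (List.ofFn fun j => cOneBar (b j)).prod }

/-- The convex cone generated by a set `S` (nonnegative real coefficients). -/
def realCone {n : ℕ} (S : Set (CForms n)) : Set (CForms n) :=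
  { x | ∃ (m : ℕ) (t : Fin m → ℝ) (y : Fin m → CForms n),
      (∀ k, 0 ≤ t k) ∧ (∀ k, y k ∈ S) ∧ x = ∑ k, (t k : ℂ) • y k }

/-- The generators `α₁ ∧ iᾱ₁ ∧ … ∧ α_p ∧ iᾱ_p` (`α_j ∈ V*`) of the strongly positive cone. -/
def cStrongGen (n p : ℕ) : Set (CForms n) :=
  { x | ∃ c : Fin p → Fin n → ℂ,
      x = (List.ofFn fun j => cOne (c j) * (Complex.I • cConjOne (c j))).prod }

/-- The cone `Λ^{p,p}_{+,s}V*` of strongly positive `(p,p)`-forms. -/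
def cStrongPos (n p : ℕ) : Set (CForms n) := realCone (cStrongGen n p)

/-- The generators `i^{p²} α ∧ ᾱ` (`α ∈ Λ^{p,0}V*`, written as a sum of decomposables)
of the positive cone. -/
def cPosGen (n p : ℕ) : Set (CForms n) :=
  { x | ∃ (m : ℕ) (c : Fin m → Fin p → Fin n → ℂ),
      x = Complex.I ^ (p ^ 2) • ((∑ l, cDecomp (c l)) * (∑ l, cDecompBar (c l))) }

/-- The cone `Λ^{p,p}_{+}V*` of positive `(p,p)`-forms. -/
def cPos (n p : ℕ) : Set (CForms n) := realCone (cPosGen n p)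

/-- The canonical orientation form `ω_n = du_1 ∧ i dū_1 ∧ … ∧ du_n ∧ i dū_n`. -/
def cOmegaTop (n : ℕ) : CForms n := (List.ofFn fun i : Fin n => cdu i * (Complex.I • cdub i)).prod

/-- The set `Λ^{p,p}_{+,w}V*` of weakly positive `(p,p)`-forms: `(p,p)`-forms `ω` such that
for every strongly positive `η` of type `(n-p,n-p)` there is a real `γ ≥ 0` with
`ω ∧ η = γ ω_n`. -/
def cWeakPos (n p : ℕ) : Set (CForms n) :=
  { x | x ∈ CFormsPQ n p p ∧
      ∀ η ∈ cStrongPos n (n - p), ∃ γ : ℝ, 0 ≤ γ ∧ x * η = (γ : ℂ) • cOmegaTop n }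

/-- `σ` is the complex conjugation of `Λ^{·,·}V*`: the (unique) antilinear multiplicative
involution of the ℝ-algebra `Λ^{·,·}V*` with `σ(du_i) = dū_i` and `σ(dū_i) = du_i`. -/
structure IsConjugation (n : ℕ) (σ : CForms n → CForms n) : Prop where
  map_add : ∀ x y, σ (x + y) = σ x + σ y
  map_smul : ∀ (c : ℂ) (x), σ (c • x) = (starRingEnd ℂ) c • σ x
  map_mul : ∀ x y, σ (x * y) = σ x * σ y
  map_one : σ 1 = 1
  map_du : ∀ i : Fin n, σ (cdu i) = cdub i
  map_dub : ∀ i : Fin n, σ (cdub i) = cdu i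

/-- `F` is the antilinear involution of the ℝ-algebra `Λ^{·,·}V*` determined by
`F(λ) = λ̄`, `F(du_i) = du_i` and `F(dū_i) = -dū_i`. -/
structure IsFInvolution (n : ℕ) (F : CForms n → CForms n) : Prop where
  map_add : ∀ x y, F (x + y) = F x + F y
  map_smul : ∀ (c : ℂ) (x), F (c • x) = (starRingEnd ℂ) c • F x
  map_mul : ∀ x y, F (x * y) = F x * F y
  map_one : F 1 = 1
  map_du : ∀ i : Fin n, F (cdu i) = cdu i
  map_dub : ∀ i : Fin n, F (cdub i) = - cdub i

/-- `ι` is the canonical embedding `Λ^{·,·}V' → Λ^{·,·}V*`: the (unique) ℝ-algebra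
homomorphism with `ι(d'u_j) = du_j` and `ι(d''u_j) = i dū_j`.  Its image is the set of
`F`-invariant complex forms. -/
structure IsIota (n : ℕ) (ι : LForms n → CForms n) : Prop where
  map_add : ∀ x y, ι (x + y) = ι x + ι y
  map_smul : ∀ (c : ℝ) (x), ι (c • x) = (c : ℂ) • ι x
  map_mul : ∀ x y, ι (x * y) = ι x * ι y
  map_one : ι 1 = 1
  map_du : ∀ i : Fin n, ι (ldu i) = cdu i
  map_ddu : ∀ i : Fin n, ι (lddu i) = Complex.I • cdub i

-- AUX START
section AuxLemmas

lemma cSwap {n : ℕ} (v w : (Fin n ⊕ Fin n) → ℂ) :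
    ExteriorAlgebra.ι ℂ v * ExteriorAlgebra.ι ℂ w
      = -(ExteriorAlgebra.ι ℂ w * ExteriorAlgebra.ι ℂ v) :=
  eq_neg_of_add_eq_zero_left (ExteriorAlgebra.ι_add_mul_swap v w)

lemma cdub_mul_cdu {n : ℕ} (i j : Fin n) : cdub i * cdu j = -(cdu j * cdub i) := cSwap _ _

lemma cdub_mul_cdu_assoc {n : ℕ} (i j : Fin n) (x : CForms n) :
    cdub i * (cdu j * x) = -(cdu j * (cdub i * x)) := by
  rw [← mul_assoc, cdub_mul_cdu, neg_mul, mul_assoc]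

lemma IsLagerbergJ.map_neg {n : ℕ} {J : LForms n → LForms n} (hJ : IsLagerbergJ n J)
    (x : LForms n) : J (-x) = -(J x) := by
  simpa using hJ.map_smul (-1) x

lemma IsLagerbergJ.map_sub {n : ℕ} {J : LForms n → LForms n} (hJ : IsLagerbergJ n J)
    (x y : LForms n) : J (x - y) = J x - J y := by
  rw [sub_eq_add_neg, hJ.map_add, hJ.map_neg, sub_eq_add_neg]

lemma IsIota.map_neg {n : ℕ} {ι : LForms n → CForms n} (hι : IsIota n ι)
    (x : LForms n) : ι (-x) = -(ι x) := by
  simpa using hι.map_smul (-1) x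

lemma IsIota.map_sub {n : ℕ} {ι : LForms n → CForms n} (hι : IsIota n ι)
    (x y : LForms n) : ι (x - y) = ι x - ι y := by
  rw [sub_eq_add_neg, hι.map_add, hι.map_neg, sub_eq_add_neg]

lemma IsFInvolution.map_neg {n : ℕ} {F : CForms n → CForms n} (hF : IsFInvolution n F)
    (x : CForms n) : F (-x) = -(F x) := by
  simpa using hF.map_smul (-1) x

lemma IsFInvolution.map_sub {n : ℕ} {F : CForms n → CForms n} (hF : IsFInvolution n F)
    (x y : CForms n) : F (x - y) = F x - F y := by
  rw [sub_eq_add_neg, hF.map_add, hF.map_neg, sub_eq_add_neg]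

end AuxLemmas
-- AUX END

section Part4

lemma det_fin_four' {R : Type*} [CommRing R] (A : Matrix (Fin 4) (Fin 4) R) : A.det =
    A 0 0 * (A 1 1 * (A 2 2 * A 3 3 - A 2 3 * A 3 2) - A 1 2 * (A 2 1 * A 3 3 - A 2 3 * A 3 1)
      + A 1 3 * (A 2 1 * A 3 2 - A 2 2 * A 3 1))
  - A 0 1 * (A 1 0 * (A 2 2 * A 3 3 - A 2 3 * A 3 2) - A 1 2 * (A 2 0 * A 3 3 - A 2 3 * A 3 0)
      + A 1 3 * (A 2 0 * A 3 2 - A 2 2 * A 3 0))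
  + A 0 2 * (A 1 0 * (A 2 1 * A 3 3 - A 2 3 * A 3 1) - A 1 1 * (A 2 0 * A 3 3 - A 2 3 * A 3 0)
      + A 1 3 * (A 2 0 * A 3 1 - A 2 1 * A 3 0))
  - A 0 3 * (A 1 0 * (A 2 1 * A 3 2 - A 2 2 * A 3 1) - A 1 1 * (A 2 0 * A 3 2 - A 2 2 * A 3 0)
      + A 1 2 * (A 2 0 * A 3 1 - A 2 1 * A 3 0)) := by
  rw [Matrix.det_succ_row_zero]
  simp [Fin.sum_univ_succ, Matrix.det_fin_three, Matrix.submatrix_apply, Fin.succAbove,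
    show Fin.succ 2 = (3:Fin 4) from rfl, show Fin.castSucc 2 = (2:Fin 4) from rfl]
  ring

/-- Coefficient functional pattern: an alternating map extracting a 4x4 determinant of
selected coordinates. -/
def coefMap (k : Fin 4 → (Fin 4 ⊕ Fin 4)) : ((Fin 4 ⊕ Fin 4) → ℝ) [⋀^Fin 4]→ₗ[ℝ] ℝ :=
  Matrix.detRowAlternating.compLinearMap (LinearMap.funLeft ℝ ℝ k)

lemma coefMap_apply (k : Fin 4 → (Fin 4 ⊕ Fin 4)) (v : Fin 4 → ((Fin 4 ⊕ Fin 4) → ℝ)) :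
    coefMap k v = Matrix.det (Matrix.of fun i j => v i (k j)) := rfl

/-- The Plücker quadratic form as a functional on (2,2)-forms. -/
def APl : ((Fin 4 ⊕ Fin 4) → ℝ) [⋀^Fin 4]→ₗ[ℝ] ℝ :=
  coefMap ![.inl 0, .inl 1, .inr 2, .inr 3] + coefMap ![.inl 2, .inl 3, .inr 0, .inr 1]
  - coefMap ![.inl 0, .inl 2, .inr 1, .inr 3] - coefMap ![.inl 1, .inl 3, .inr 0, .inr 2]
  + coefMap ![.inl 0, .inl 3, .inr 1, .inr 2] + coefMap ![.inl 1, .inl 2, .inr 0, .inr 3]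

def fA : ∀ i : ℕ, ((Fin 4 ⊕ Fin 4) → ℝ) [⋀^Fin i]→ₗ[ℝ] ℝ
  | 4 => APl
  | _ => 0

def LPl : LForms 4 →ₗ[ℝ] ℝ := ExteriorAlgebra.liftAlternating fA

lemma LPl_prod (v : Fin 4 → ((Fin 4 ⊕ Fin 4) → ℝ)) :
    LPl (ExteriorAlgebra.ι ℝ (v 0) * (ExteriorAlgebra.ι ℝ (v 1) *
      (ExteriorAlgebra.ι ℝ (v 2) * ExteriorAlgebra.ι ℝ (v 3)))) = APl v := by
  have h : ExteriorAlgebra.ι ℝ (v 0) * (ExteriorAlgebra.ι ℝ (v 1) *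
      (ExteriorAlgebra.ι ℝ (v 2) * ExteriorAlgebra.ι ℝ (v 3)))
      = ExteriorAlgebra.ιMulti ℝ 4 v := by
    rw [ExteriorAlgebra.ιMulti_apply]
    simp [List.ofFn_succ, mul_assoc, show Fin.succ 2 = (3:Fin 4) from rfl,
      show Fin.succ 0 = (1:Fin 4) from rfl, show Fin.succ 1 = (2:Fin 4) from rfl]
  rw [h, LPl, ExteriorAlgebra.liftAlternating_apply_ιMulti]
  rfl

/-- first-block vector with coefficients `c` -/
def uu (c : Fin 4 → ℝ) : (Fin 4 ⊕ Fin 4) → ℝ := Sum.elim c 0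

/-- second-block vector with coefficients `c` -/
def vv (c : Fin 4 → ℝ) : (Fin 4 ⊕ Fin 4) → ℝ := Sum.elim 0 c

lemma lOne_eq_ι (c : Fin 4 → ℝ) : lOne c = ExteriorAlgebra.ι ℝ (uu c) := by
  have h : uu c = ∑ i, c i • (Pi.single (Sum.inl i) 1 : (Fin 4 ⊕ Fin 4) → ℝ) := by
    ext (a | a) <;>
      simp [uu, Finset.sum_apply, Pi.single_apply, Fin.sum_univ_four] <;>
      fin_cases a <;> simp
  rw [h, map_sum]
  simp [lOne, ldu]

lemma lOne''_eq_ι (c : Fin 4 → ℝ) : lOne'' c = ExteriorAlgebra.ι ℝ (vv c) := by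
  have h : vv c = ∑ i, c i • (Pi.single (Sum.inr i) 1 : (Fin 4 ⊕ Fin 4) → ℝ) := by
    ext (a | a) <;>
      simp [vv, Finset.sum_apply, Pi.single_apply, Fin.sum_univ_four] <;>
      fin_cases a <;> simp
  rw [h, map_sum]
  simp [lOne'', lddu]

lemma APl_gen (c0 c1 : Fin 4 → ℝ) : APl ![uu c0, vv c0, uu c1, vv c1] = 0 := by
  simp only [APl, AlternatingMap.add_apply, AlternatingMap.sub_apply, coefMap_apply,
    det_fin_four']
  simp only [Matrix.of_apply, Matrix.cons_val', Matrix.cons_val_zero, Matrix.cons_val_one,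
    Matrix.head_cons, Matrix.cons_val_two, Matrix.tail_cons, Matrix.cons_val_three,
    Matrix.empty_val', Matrix.cons_val_fin_one, uu, vv, Sum.elim_inl, Sum.elim_inr]
  simp only [Pi.zero_apply]
  ring

/-- LPl vanishes on every strong generator. -/
lemma LPl_strongGen (x : LForms 4) (hx : x ∈ lStrongGen 4 2) : LPl x = 0 := by
  obtain ⟨c, rfl⟩ := hx
  have h : (List.ofFn fun j => lOne (c j) * lOne'' (c j)).prod
      = ExteriorAlgebra.ι ℝ (uu (c 0)) * (ExteriorAlgebra.ι ℝ (vv (c 0)) *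
        (ExteriorAlgebra.ι ℝ (uu (c 1)) * ExteriorAlgebra.ι ℝ (vv (c 1)))) := by
    simp [List.ofFn_succ, lOne_eq_ι, lOne''_eq_ι, mul_assoc]
  rw [h]
  exact (LPl_prod ![uu (c 0), vv (c 0), uu (c 1), vv (c 1)]).trans (APl_gen (c 0) (c 1))

lemma ldu_eq_ι (i : Fin 4) : ldu i = ExteriorAlgebra.ι ℝ (uu (Pi.single i 1)) := by
  rw [ldu]; congr 1; ext (a | a) <;> simp [uu, Pi.single_apply]

lemma lddu_eq_ι (i : Fin 4) : lddu i = ExteriorAlgebra.ι ℝ (vv (Pi.single i 1)) := by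
  rw [lddu]; congr 1; ext (a | a) <;> simp [vv, Pi.single_apply]

lemma LPl_mono (p q r s : Fin 4) :
    LPl (ldu p * (ldu q * (lddu r * lddu s)))
      = APl ![uu (Pi.single p 1), uu (Pi.single q 1), vv (Pi.single r 1), vv (Pi.single s 1)] := by
  rw [ldu_eq_ι p, ldu_eq_ι q, lddu_eq_ι r, lddu_eq_ι s]
  exact LPl_prod ![uu (Pi.single p 1), uu (Pi.single q 1), vv (Pi.single r 1), vv (Pi.single s 1)]


lemma APl_v1 : APl ![uu (Pi.single 0 1), uu (Pi.single 2 1),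
    vv (Pi.single 0 1), vv (Pi.single 2 1)] = 0 := by
  simp only [APl, AlternatingMap.add_apply, AlternatingMap.sub_apply, coefMap_apply,
    det_fin_four']
  simp [Matrix.of_apply, uu, vv, Pi.single_apply, Matrix.vecHead, Matrix.vecTail]

lemma APl_v2 : APl ![uu (Pi.single 0 1), uu (Pi.single 2 1),
    vv (Pi.single 1 1), vv (Pi.single 3 1)] = -1 := by
  simp only [APl, AlternatingMap.add_apply, AlternatingMap.sub_apply, coefMap_apply,
    det_fin_four']
  simp [Matrix.of_apply, uu, vv, Pi.single_apply, Matrix.vecHead, Matrix.vecTail]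

lemma APl_v3 : APl ![uu (Pi.single 1 1), uu (Pi.single 3 1),
    vv (Pi.single 0 1), vv (Pi.single 2 1)] = -1 := by
  simp only [APl, AlternatingMap.add_apply, AlternatingMap.sub_apply, coefMap_apply,
    det_fin_four']
  simp [Matrix.of_apply, uu, vv, Pi.single_apply, Matrix.vecHead, Matrix.vecTail]

lemma APl_v4 : APl ![uu (Pi.single 1 1), uu (Pi.single 3 1),
    vv (Pi.single 1 1), vv (Pi.single 3 1)] = 0 := by
  simp only [APl, AlternatingMap.add_apply, AlternatingMap.sub_apply, coefMap_apply,
    det_fin_four']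
  simp [Matrix.of_apply, uu, vv, Pi.single_apply, Matrix.vecHead, Matrix.vecTail]

lemma APl_v5 : APl ![uu (Pi.single 0 1), uu (Pi.single 3 1),
    vv (Pi.single 0 1), vv (Pi.single 3 1)] = 0 := by
  simp only [APl, AlternatingMap.add_apply, AlternatingMap.sub_apply, coefMap_apply,
    det_fin_four']
  simp [Matrix.of_apply, uu, vv, Pi.single_apply, Matrix.vecHead, Matrix.vecTail]

lemma APl_v6 : APl ![uu (Pi.single 0 1), uu (Pi.single 3 1),
    vv (Pi.single 1 1), vv (Pi.single 2 1)] = 1 := by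
  simp only [APl, AlternatingMap.add_apply, AlternatingMap.sub_apply, coefMap_apply,
    det_fin_four']
  simp [Matrix.of_apply, uu, vv, Pi.single_apply, Matrix.vecHead, Matrix.vecTail]

lemma APl_v7 : APl ![uu (Pi.single 1 1), uu (Pi.single 2 1),
    vv (Pi.single 0 1), vv (Pi.single 3 1)] = 1 := by
  simp only [APl, AlternatingMap.add_apply, AlternatingMap.sub_apply, coefMap_apply,
    det_fin_four']
  simp [Matrix.of_apply, uu, vv, Pi.single_apply, Matrix.vecHead, Matrix.vecTail]

lemma APl_v8 : APl ![uu (Pi.single 1 1), uu (Pi.single 2 1),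
    vv (Pi.single 1 1), vv (Pi.single 2 1)] = 0 := by
  simp only [APl, AlternatingMap.add_apply, AlternatingMap.sub_apply, coefMap_apply,
    det_fin_four']
  simp [Matrix.of_apply, uu, vv, Pi.single_apply, Matrix.vecHead, Matrix.vecTail]

end Part4

section Part13

lemma lDecomp_pair (c : Fin 2 → Fin 4 → ℝ) : lDecomp c = lOne (c 0) * lOne (c 1) := by
  simp [lDecomp, List.ofFn_succ]

lemma lDecomp''_pair (c : Fin 2 → Fin 4 → ℝ) : lDecomp'' c = lOne'' (c 0) * lOne'' (c 1) := by
  simp [lDecomp'', List.ofFn_succ]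

lemma lOne_expand (c : Fin 4 → ℝ) :
    lOne c = c 0 • ldu 0 + c 1 • ldu 1 + c 2 • ldu 2 + c 3 • ldu 3 := by
  rw [lOne, Fin.sum_univ_four]

lemma lOne''_expand (c : Fin 4 → ℝ) :
    lOne'' c = c 0 • lddu 0 + c 1 • lddu 1 + c 2 • lddu 2 + c 3 • lddu 3 := by
  rw [lOne'', Fin.sum_univ_four]

lemma cOne_expand (c : Fin 4 → ℂ) :
    cOne c = c 0 • cdu 0 + c 1 • cdu 1 + c 2 • cdu 2 + c 3 • cdu 3 := by
  rw [cOne, Fin.sum_univ_four]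

lemma cConjOne_expand (c : Fin 4 → ℂ) :
    cConjOne c = (starRingEnd ℂ) (c 0) • cdub 0 + (starRingEnd ℂ) (c 1) • cdub 1
      + (starRingEnd ℂ) (c 2) • cdub 2 + (starRingEnd ℂ) (c 3) • cdub 3 := by
  rw [cConjOne, Fin.sum_univ_four]

end Part13

set_option maxHeartbeats 4000000 in
/-- Example 2.20. Let `n = 4`,
`β₁ = d'u_1∧d'u_3 − d'u_2∧d'u_4`, `β₂ = d'u_1∧d'u_4 + d'u_2∧d'u_3` in `Λ^{2,0}V'` (0-based
indices below), and `ω = −β₁∧J(β₁) − β₂∧J(β₂) ∈ Λ^{2,2}V'`.  Then: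
(1) `ω` is a positive Lagerberg form;
(2) `ι(ω) = ½(η + F(η))` for
`η = (du_1 + i du_2) ∧ i(dū_1 − i dū_2) ∧ (du_3 + i du_4) ∧ i(dū_3 − i dū_4)`,
and `ι(ω)` is a strongly positive complex form;
(3) `ω` is not a strongly positive Lagerberg form. -/
theorem positive_but_not_strongly_positive_example
    (J : LForms 4 → LForms 4) (hJ : IsLagerbergJ 4 J)
    (F : CForms 4 → CForms 4) (hF : IsFInvolution 4 F)
    (ι : LForms 4 → CForms 4) (hι : IsIota 4 ι)
    (β₁ β₂ ω : LForms 4)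
    (hβ₁ : β₁ = ldu 0 * ldu 2 - ldu 1 * ldu 3)
    (hβ₂ : β₂ = ldu 0 * ldu 3 + ldu 1 * ldu 2)
    (hω : ω = -(β₁ * J β₁) - β₂ * J β₂)
    (η : CForms 4)
    (hη : η = (cdu 0 + Complex.I • cdu 1) * (Complex.I • (cdub 0 - Complex.I • cdub 1)) *
      ((cdu 2 + Complex.I • cdu 3) * (Complex.I • (cdub 2 - Complex.I • cdub 3)))) :
    ω ∈ lPos 4 2 ∧
    ι ω = (2⁻¹ : ℂ) • (η + F η) ∧ ι ω ∈ cStrongPos 4 2 ∧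
    ω ∉ lStrongPos 4 2 := by
  have hJβ₁ : J β₁ = lddu 0 * lddu 2 - lddu 1 * lddu 3 := by
    rw [hβ₁, hJ.map_sub, hJ.map_mul, hJ.map_mul, hJ.map_du, hJ.map_du, hJ.map_du, hJ.map_du]
  have hJβ₂ : J β₂ = lddu 0 * lddu 3 + lddu 1 * lddu 2 := by
    rw [hβ₂, hJ.map_add, hJ.map_mul, hJ.map_mul, hJ.map_du, hJ.map_du, hJ.map_du, hJ.map_du]
  -- Part 2
  have lhs : ι ω = -((cdu 0 * cdu 2) * ((Complex.I • cdub 0) * (Complex.I • cdub 2))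
      - (cdu 0 * cdu 2) * ((Complex.I • cdub 1) * (Complex.I • cdub 3))
      - (cdu 1 * cdu 3) * ((Complex.I • cdub 0) * (Complex.I • cdub 2))
      + (cdu 1 * cdu 3) * ((Complex.I • cdub 1) * (Complex.I • cdub 3)))
      - ((cdu 0 * cdu 3) * ((Complex.I • cdub 0) * (Complex.I • cdub 3))
      + (cdu 0 * cdu 3) * ((Complex.I • cdub 1) * (Complex.I • cdub 2))
      + (cdu 1 * cdu 2) * ((Complex.I • cdub 0) * (Complex.I • cdub 3))
      + (cdu 1 * cdu 2) * ((Complex.I • cdub 1) * (Complex.I • cdub 2))) := by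
    rw [hω, hβ₁, hβ₂]
    simp only [hJ.map_sub, hJ.map_add, hJ.map_mul, hJ.map_du,
      hι.map_sub, hι.map_neg, hι.map_add, hι.map_mul, hι.map_du, hι.map_ddu]
    noncomm_ring
    module
  have hFη : F η = (cdu 0 - Complex.I • cdu 1) * (Complex.I • (cdub 0 + Complex.I • cdub 1)) *
      ((cdu 2 - Complex.I • cdu 3) * (Complex.I • (cdub 2 + Complex.I • cdub 3))) := by
    rw [hη]
    simp only [hF.map_mul, hF.map_add, hF.map_sub, hF.map_smul, hF.map_du, hF.map_dub,
      Complex.conj_I]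
    simp only [mul_add, add_mul, mul_sub, sub_mul, smul_mul_assoc, mul_smul_comm, mul_assoc,
      smul_smul, neg_mul, mul_neg, smul_neg, neg_neg, neg_smul, smul_add, smul_sub,
      cdub_mul_cdu, cdub_mul_cdu_assoc, Complex.I_mul_I, one_mul, mul_one, one_smul]
    module
  have part2 : ι ω = (2⁻¹ : ℂ) • (η + F η) := by
    rw [lhs, hFη, hη]
    simp only [mul_add, add_mul, mul_sub, sub_mul, smul_mul_assoc, mul_smul_comm, mul_assoc,
      smul_smul, neg_mul, mul_neg, smul_neg, neg_neg, neg_smul, smul_add, smul_sub,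
      cdub_mul_cdu, cdub_mul_cdu_assoc, Complex.I_mul_I, one_mul, mul_one, one_smul]
    module
  refine ⟨?_, part2, ?_, ?_⟩
  -- Part 1: ω ∈ lPos 4 2
  · refine ⟨2, ![1, 1], ![-(β₁ * J β₁), -(β₂ * J β₂)], fun k => by fin_cases k <;> norm_num,
      fun k => ?_, ?_⟩
    · fin_cases k
      · refine ⟨2, ![![![1,0,0,0], ![0,0,1,0]], ![![0,-1,0,0], ![0,0,0,1]]], ?_⟩
        have e1 : (∑ l : Fin 2, lDecomp (![![![(1:ℝ),0,0,0], ![0,0,1,0]],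
            ![![0,-1,0,0], ![0,0,0,1]]] l)) = β₁ := by
          rw [hβ₁]
          simp [Fin.sum_univ_two, lDecomp_pair, lOne_expand]
          noncomm_ring
        have e2 : (∑ l : Fin 2, lDecomp'' (![![![(1:ℝ),0,0,0], ![0,0,1,0]],
            ![![0,-1,0,0], ![0,0,0,1]]] l)) = J β₁ := by
          rw [hJβ₁]
          simp [Fin.sum_univ_two, lDecomp''_pair, lOne''_expand]
          noncomm_ring
        rw [e1, e2]
        norm_num
      · refine ⟨2, ![![![1,0,0,0], ![0,0,0,1]], ![![0,1,0,0], ![0,0,1,0]]], ?_⟩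
        have e1 : (∑ l : Fin 2, lDecomp (![![![(1:ℝ),0,0,0], ![0,0,0,1]],
            ![![0,1,0,0], ![0,0,1,0]]] l)) = β₂ := by
          rw [hβ₂]
          simp [Fin.sum_univ_two, lDecomp_pair, lOne_expand]
        have e2 : (∑ l : Fin 2, lDecomp'' (![![![(1:ℝ),0,0,0], ![0,0,0,1]],
            ![![0,1,0,0], ![0,0,1,0]]] l)) = J β₂ := by
          rw [hJβ₂]
          simp [Fin.sum_univ_two, lDecomp''_pair, lOne''_expand]
        rw [e1, e2]
        norm_num
    · rw [hω]
      simp [Fin.sum_univ_two]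
      noncomm_ring
  -- Part 3: ι ω ∈ cStrongPos 4 2
  · refine ⟨2, ![1/2, 1/2], ![η, F η], fun k => by fin_cases k <;> norm_num,
      fun k => ?_, ?_⟩
    · have c1 : cOne ![1, Complex.I, 0, 0] = cdu 0 + Complex.I • cdu 1 := by
        simp [cOne_expand]
      have c2 : cOne ![0, 0, 1, Complex.I] = cdu 2 + Complex.I • cdu 3 := by
        simp [cOne_expand]
      have c3 : Complex.I • cConjOne ![1, Complex.I, 0, 0]
          = Complex.I • (cdub 0 - Complex.I • cdub 1) := by
        simp [cConjOne_expand, Complex.conj_I]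
        module
      have c4 : Complex.I • cConjOne ![0, 0, 1, Complex.I]
          = Complex.I • (cdub 2 - Complex.I • cdub 3) := by
        simp [cConjOne_expand, Complex.conj_I]
        module
      have c5 : cOne ![1, -Complex.I, 0, 0] = cdu 0 - Complex.I • cdu 1 := by
        simp [cOne_expand]
        module
      have c6 : cOne ![0, 0, 1, -Complex.I] = cdu 2 - Complex.I • cdu 3 := by
        simp [cOne_expand]
        module
      have c7 : Complex.I • cConjOne ![1, -Complex.I, 0, 0]
          = Complex.I • (cdub 0 + Complex.I • cdub 1) := by
        simp [cConjOne_expand, Complex.conj_I]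
      have c8 : Complex.I • cConjOne ![0, 0, 1, -Complex.I]
          = Complex.I • (cdub 2 + Complex.I • cdub 3) := by
        simp [cConjOne_expand, Complex.conj_I]
      fin_cases k
      · refine ⟨![![1, Complex.I, 0, 0], ![0, 0, 1, Complex.I]], ?_⟩
        rw [hη]
        simp only [List.ofFn_succ, List.ofFn_zero, List.prod_cons, List.prod_nil, mul_one,
          Fin.isValue, Matrix.cons_val_zero, Matrix.cons_val_one, Matrix.head_cons,
          Fin.succ_zero_eq_one]
        rw [c1, c2, c3, c4]
        rfl
      · refine ⟨![![1, -Complex.I, 0, 0], ![0, 0, 1, -Complex.I]], ?_⟩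
        rw [hFη]
        simp only [List.ofFn_succ, List.ofFn_zero, List.prod_cons, List.prod_nil, mul_one,
          Fin.isValue, Matrix.cons_val_zero, Matrix.cons_val_one, Matrix.head_cons,
          Fin.succ_zero_eq_one]
        rw [c5, c6, c7, c8]
        rfl
    · rw [part2]
      simp [Fin.sum_univ_two]
      push_cast
      module
  -- Part 4: ω ∉ lStrongPos 4 2
  · intro hcon
    obtain ⟨m, t, y, ht, hy, hsum⟩ := hcon
    have h0 : LPl ω = 0 := by
      rw [hsum, map_sum]
      refine Finset.sum_eq_zero fun k _ => ?_
      rw [map_smul, LPl_strongGen _ (hy k), smul_zero]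
    have hωe : ω = -(ldu 0 * (ldu 2 * (lddu 0 * lddu 2)))
        + ldu 0 * (ldu 2 * (lddu 1 * lddu 3))
        + ldu 1 * (ldu 3 * (lddu 0 * lddu 2))
        - ldu 1 * (ldu 3 * (lddu 1 * lddu 3))
        - ldu 0 * (ldu 3 * (lddu 0 * lddu 3))
        - ldu 0 * (ldu 3 * (lddu 1 * lddu 2))
        - ldu 1 * (ldu 2 * (lddu 0 * lddu 3))
        - ldu 1 * (ldu 2 * (lddu 1 * lddu 2)) := by
      rw [hω, hJβ₁, hJβ₂, hβ₁, hβ₂]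
      noncomm_ring
    have h4 : LPl ω = -4 := by
      rw [hωe]
      simp only [map_add, map_sub, map_neg, LPl_mono, APl_v1, APl_v2, APl_v3, APl_v4,
        APl_v5, APl_v6, APl_v7, APl_v8]
      norm_num
    rw [h0] at h4
    norm_num at h4
end
end
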